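/- For any finite-valued random variables X₁, …, Xₙ and Y on a common probability space, DTC(X₁;…;Xₙ;Y) = I(X₁,…,Xₙ ; Y) + DTC(X₁;…;Xₙ | Y), where DTC(X₁;…;Xₙ;Y) is the dual total correlation of the (n+1)-tuple (X₁,…,Xₙ,Y). -/
import Mathlib


open MeasureTheory Real

namespace Corr

variable {Ω : Type*} [MeasurableSpace Ω]

/-- Shannon entropy of a finite-valued random variable. -/
noncomputable def shEnt {K : Type*} [Fintype K] (μ : Measure Ω) (X : Ω → K) : ℝ :=
  ∑ k : K, Real.negMulLog ((μ (X ⁻¹' {k})).toReal)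

/-- Conditional Shannon entropy `H(X | Y)`. -/
noncomputable def condEnt {K L : Type*} [Fintype K] [Fintype L]
    (μ : Measure Ω) (X : Ω → K) (Y : Ω → L) : ℝ :=
  shEnt μ (fun ω => (X ω, Y ω)) - shEnt μ Y

/-- Mutual information `I(X ; Y)`. -/
noncomputable def mutInfo {K L : Type*} [Fintype K] [Fintype L]
    (μ : Measure Ω) (X : Ω → K) (Y : Ω → L) : ℝ :=
  shEnt μ X + shEnt μ Y - shEnt μ (fun ω => (X ω, Y ω))

/-- Conditional mutual information `I(X ; Y | Z)`. -/
noncomputable def condMutInfo {K L M : Type*} [Fintype K] [Fintype L] [Fintype M]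
    (μ : Measure Ω) (X : Ω → K) (Y : Ω → L) (Z : Ω → M) : ℝ :=
  condEnt μ X Z + condEnt μ Y Z - condEnt μ (fun ω => (X ω, Y ω)) Z

/-- The joint random variable of a family of random variables. -/
def joint {ι : Type*} {K : ι → Type*} (X : ∀ i, Ω → K i) : Ω → ∀ i, K i :=
  fun ω i => X i ω

/-- Total correlation `TC(X₁;…;Xₙ)`. -/
noncomputable def TC {ι : Type*} [Fintype ι] [DecidableEq ι] {K : ι → Type*}
    [∀ i, Fintype (K i)] (μ : Measure Ω) (X : ∀ i, Ω → K i) : ℝ :=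
  (∑ i, shEnt μ (X i)) - shEnt μ (joint X)

/-- Dual total correlation `DTC(X₁;…;Xₙ)`. -/
noncomputable def DTC {ι : Type*} [Fintype ι] [DecidableEq ι] {K : ι → Type*}
    [∀ i, Fintype (K i)] (μ : Measure Ω) (X : ∀ i, Ω → K i) : ℝ :=
  shEnt μ (joint X) - ∑ i, condEnt μ (X i) (joint fun j : {j : ι // j ≠ i} => X j.1)

/-- Conditional total correlation `TC(X₁;…;Xₙ | Y)`. -/
noncomputable def condTC {ι : Type*} [Fintype ι] [DecidableEq ι] {K : ι → Type*}
    [∀ i, Fintype (K i)] {L : Type*} [Fintype L]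
    (μ : Measure Ω) (X : ∀ i, Ω → K i) (Y : Ω → L) : ℝ :=
  (∑ i, condEnt μ (X i) Y) - condEnt μ (joint X) Y

/-- Conditional dual total correlation `DTC(X₁;…;Xₙ | Y)`. -/
noncomputable def condDTC {ι : Type*} [Fintype ι] [DecidableEq ι] {K : ι → Type*}
    [∀ i, Fintype (K i)] {L : Type*} [Fintype L]
    (μ : Measure Ω) (X : ∀ i, Ω → K i) (Y : Ω → L) : ℝ :=
  condEnt μ (joint X) Y -
    ∑ i, condEnt μ (X i)
      (fun ω => (joint (fun j : {j : ι // j ≠ i} => X j.1) ω, Y ω))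

universe u

/-- The family of target spaces of the `(n+1)`-tuple `(X₁,…,Xₙ,Y)`, indexed by
`Option (Fin n)`: `none` corresponds to `Y` and `some i` to `Xᵢ`. -/
def extFam {n : ℕ} (K : Fin n → Type u) (L : Type u) : Option (Fin n) → Type u
  | none => L
  | some i => K i

instance extFam.fintype {n : ℕ} (K : Fin n → Type u) (L : Type u)
    [∀ i, Fintype (K i)] [Fintype L] : ∀ o, Fintype (extFam K L o)
  | none => inferInstanceAs (Fintype L)
  | some i => inferInstanceAs (Fintype (K i))

instance extFam.measurableSpace {n : ℕ} (K : Fin n → Type u) (L : Type u)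
    [∀ i, MeasurableSpace (K i)] [MeasurableSpace L] : ∀ o, MeasurableSpace (extFam K L o)
  | none => inferInstanceAs (MeasurableSpace L)
  | some i => inferInstanceAs (MeasurableSpace (K i))

instance extFam.measurableSingletonClass {n : ℕ} (K : Fin n → Type u) (L : Type u)
    [∀ i, MeasurableSpace (K i)] [MeasurableSpace L]
    [∀ i, MeasurableSingletonClass (K i)] [MeasurableSingletonClass L] :
    ∀ o, MeasurableSingletonClass (extFam K L o)
  | none => inferInstanceAs (MeasurableSingletonClass L)
  | some i => inferInstanceAs (MeasurableSingletonClass (K i))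

/-- The `(n+1)`-tuple `(X₁,…,Xₙ,Y)` as a family indexed by `Option (Fin n)`. -/
def extTuple {n : ℕ} {K : Fin n → Type u} {L : Type u} {Ω : Type*}
    (X : ∀ i, Ω → K i) (Y : Ω → L) : ∀ o, Ω → extFam K L o
  | none => Y
  | some i => X i

lemma shEnt_comp_inj {K L : Type*} [Fintype K] [Fintype L] (μ : Measure Ω)
    (X : Ω → K) (X' : Ω → L) (g : K → L) (hg : Function.Injective g)
    (h : ∀ ω, X' ω = g (X ω)) :
    shEnt μ X' = shEnt μ X := by
  classical
  have hX' : X' = fun ω => g (X ω) := funext h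
  subst hX'
  unfold shEnt
  have h1 : ∀ k : K, (fun ω => g (X ω)) ⁻¹' {g k} = X ⁻¹' {k} := by
    intro k; ext ω; simp [hg.eq_iff]
  calc (∑ l : L, Real.negMulLog ((μ ((fun ω => g (X ω)) ⁻¹' {l})).toReal))
      = ∑ l ∈ Finset.univ.image g,
          Real.negMulLog ((μ ((fun ω => g (X ω)) ⁻¹' {l})).toReal) := by
        refine (Finset.sum_subset (Finset.subset_univ _) ?_).symm
        intro l _ hl
        have : (fun ω => g (X ω)) ⁻¹' {l} = ∅ := by
          ext ω; simp only [Set.mem_preimage, Set.mem_singleton_iff, Set.mem_empty_iff_false,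
            iff_false]
          intro h; exact hl (Finset.mem_image.mpr ⟨X ω, Finset.mem_univ _, h⟩)
        simp [this]
    _ = ∑ k : K, Real.negMulLog ((μ ((fun ω => g (X ω)) ⁻¹' {g k})).toReal) :=
        Finset.sum_image (fun a _ b _ h => hg h)
    _ = ∑ k : K, Real.negMulLog ((μ (X ⁻¹' {k})).toReal) := by
        simp only [h1]

lemma condEnt_congr_inj {K K' L M : Type*} [Fintype K] [Fintype K'] [Fintype L] [Fintype M]
    (μ : Measure Ω) (X : Ω → K) (X' : Ω → K') (Z : Ω → L) (Z' : Ω → M)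
    (e : K → K') (he : Function.Injective e) (hX : ∀ ω, X' ω = e (X ω))
    (g : L → M) (hg : Function.Injective g) (hZ : ∀ ω, Z' ω = g (Z ω)) :
    condEnt μ X' Z' = condEnt μ X Z := by
  unfold condEnt
  have h1 : shEnt μ Z' = shEnt μ Z := shEnt_comp_inj μ Z Z' g hg hZ
  have h2 : shEnt μ (fun ω => (X' ω, Z' ω)) = shEnt μ (fun ω => (X ω, Z ω)) :=
    shEnt_comp_inj μ (fun ω => (X ω, Z ω)) (fun ω => (X' ω, Z' ω)) (Prod.map e g)
      (he.prodMap hg) (fun ω => by show (X' ω, Z' ω) = (e (X ω), g (Z ω)); rw [hX, hZ])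
  rw [h1, h2]

lemma shEnt_pair_comm {K L : Type*} [Fintype K] [Fintype L]
    (μ : Measure Ω) (X : Ω → K) (Y : Ω → L) :
    shEnt μ (fun ω => (X ω, Y ω)) = shEnt μ (fun ω => (Y ω, X ω)) := by
  exact shEnt_comp_inj μ (fun ω => (Y ω, X ω)) (fun ω => (X ω, Y ω)) Prod.swap
    Prod.swap_injective (fun ω => rfl)

set_option maxHeartbeats 1000000 in
/-- For finite-valued `X₁, …, Xₙ` and `Y`,
`DTC(X₁;…;Xₙ;Y) = I(X₁,…,Xₙ ; Y) + DTC(X₁;…;Xₙ | Y)`, where `DTC(X₁;…;Xₙ;Y)` is the dual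
total correlation of the `(n+1)`-tuple `(X₁,…,Xₙ,Y)`. -/
theorem dtc_cons (μ : Measure Ω) [IsProbabilityMeasure μ]
    {n : ℕ} {K : Fin n → Type u} [∀ i, Fintype (K i)]
    [∀ i, MeasurableSpace (K i)] [∀ i, MeasurableSingletonClass (K i)]
    {L : Type u} [Fintype L] [MeasurableSpace L] [MeasurableSingletonClass L]
    (X : ∀ i, Ω → K i) (hX : ∀ i, Measurable (X i))
    (Y : Ω → L) (hY : Measurable Y) :
    DTC μ (extTuple X Y) = mutInfo μ (joint X) Y + condDTC μ X Y := by
  classical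
  -- the joint of the (n+1)-tuple versus the pair
  have he : Function.Injective
      (fun f : (∀ o, extFam K L o) => ((fun i => f (some i), f none) : (∀ i, K i) × L)) := by
    intro f g h
    funext o
    cases o with
    | none => exact congrArg Prod.snd h
    | some i => exact congrFun (congrArg Prod.fst h) i
  have hA : shEnt μ (fun ω => (joint X ω, Y ω)) = shEnt μ (joint (extTuple X Y)) :=
    shEnt_comp_inj μ (joint (extTuple X Y)) (fun ω => (joint X ω, Y ω))
      (fun f : (∀ o, extFam K L o) => ((fun i => f (some i), f none) : (∀ i, K i) × L))
      he (fun ω => rfl)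
  -- the `none` term
  have he0 : Function.Injective
      (fun f : (∀ j : {j : Option (Fin n) // j ≠ none}, extFam K L j.1) =>
        (fun i => f ⟨some i, Option.some_ne_none i⟩ : ∀ i, K i)) := by
    intro f g h
    funext j
    obtain ⟨o, ho⟩ := j
    cases o with
    | none => exact absurd rfl ho
    | some i => exact congrFun h i
  have hB : condEnt μ Y (joint X) =
      condEnt μ (extTuple X Y none)
        (joint fun j : {j : Option (Fin n) // j ≠ none} => extTuple X Y j.1) :=
    condEnt_congr_inj μ (extTuple X Y none) Y
      (joint fun j : {j : Option (Fin n) // j ≠ none} => extTuple X Y j.1) (joint X)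
      (fun y => y) (fun _ _ h => h) (fun ω => rfl)
      (fun f : (∀ j : {j : Option (Fin n) // j ≠ none}, extFam K L j.1) =>
        (fun i => f ⟨some i, Option.some_ne_none i⟩ : ∀ i, K i))
      he0 (fun ω => rfl)
  -- the `some i` terms
  have hC : ∀ i : Fin n,
      condEnt μ (extTuple X Y (some i))
        (joint fun j : {j : Option (Fin n) // j ≠ some i} => extTuple X Y j.1) =
      condEnt μ (X i)
        (fun ω => (joint (fun j : {j : Fin n // j ≠ i} => X j.1) ω, Y ω)) := by
    intro i
    have hei : Function.Injective
        (fun f : (∀ j : {j : Option (Fin n) // j ≠ some i}, extFam K L j.1) =>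
          ((fun j : {j : Fin n // j ≠ i} => f ⟨some j.1, by simp [j.2]⟩,
            f ⟨none, by simp⟩) : (∀ j : {j : Fin n // j ≠ i}, K j.1) × L)) := by
      intro f g h
      funext j
      obtain ⟨o, ho⟩ := j
      cases o with
      | none => exact congrArg Prod.snd h
      | some k =>
          have hk : k ≠ i := fun hki => ho (by rw [hki])
          exact congrFun (congrArg Prod.fst h) ⟨k, hk⟩
    exact (condEnt_congr_inj μ (extTuple X Y (some i)) (X i)
      (joint fun j : {j : Option (Fin n) // j ≠ some i} => extTuple X Y j.1)
      (fun ω => (joint (fun j : {j : Fin n // j ≠ i} => X j.1) ω, Y ω))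
      (fun x => x) (fun _ _ h => h) (fun ω => rfl)
      (fun f : (∀ j : {j : Option (Fin n) // j ≠ some i}, extFam K L j.1) =>
        ((fun j : {j : Fin n // j ≠ i} => f ⟨some j.1, by simp [j.2]⟩,
          f ⟨none, by simp⟩) : (∀ j : {j : Fin n // j ≠ i}, K j.1) × L))
      hei (fun ω => rfl)).symm
  rw [DTC, condDTC, mutInfo, Fintype.sum_option]
  rw [← hB, Finset.sum_congr rfl (fun i _ => hC i), ← hA]
  simp only [condEnt]
  rw [shEnt_pair_comm μ Y (joint X)]
  ring

end Corr
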